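/- In Vec_{ℤ/2×ℤ/2} with the toric code braiding, the tensor product algebra A(H₃) ⊗ A(H₂) (group algebra of {1,b} times group algebra of {1,a}, with multiplication twisted by the braiding) is isomorphic to the twisted group algebra A(H₅, ψ), where ψ is the nontrivial 2-cocycle on ℤ/2 × ℤ/2 with ψ(b,a) = ψ(b,c) = ψ(c,a) = ψ(c,c) = −1. -/

import Mathlib

/-- The toric code braiding on grades in `ℤ/2 × ℤ/2` (`a = (1,0)`, `b = (0,1)`,
`c = (1,1)`; `e, m, f` graded by `a, b, c`): `c_{e,m} = c_{f,f} = c_{e,f} = c_{f,m} = −1`,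
`+1` otherwise; i.e. `br g h = −1` exactly when `g.1 = 1 ∧ h.2 = 1`. -/
def toricBraiding (g h : ZMod 2 × ZMod 2) : ℂ :=
  if g.1 = 1 ∧ h.2 = 1 then -1 else 1

/-- Structure constants of the braided tensor product algebra `A(H₃) ⊗ A(H₂)`
(`H₃ = {1,b}` first, `H₂ = {1,a}` second): the basis element of total grade `g = (x,y)`
is `e_y ⊗ e_x`, and `(e_{y₁} ⊗ e_{x₁})(e_{y₂} ⊗ e_{x₂})` picks up the braiding of the
`H₂`-part of the first factor past the `H₃`-part of the second:
`br((x₁,0),(0,y₂))`, i.e. `−1` exactly when `g.1 = 1 ∧ h.2 = 1`. -/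
def tensorConst32 (g h : ZMod 2 × ZMod 2) : ℂ :=
  toricBraiding (g.1, 0) (0, h.2)

/-- The nontrivial 2-cocycle `ψ` on `ℤ/2 × ℤ/2` with
`ψ(b,a) = ψ(b,c) = ψ(c,a) = ψ(c,c) = −1` and `ψ = 1` otherwise. -/
def kleinPsi (g h : ZMod 2 × ZMod 2) : ℂ :=
  if g.2 = 1 ∧ h.1 = 1 then -1 else 1

/-- in `Vec_{ℤ/2×ℤ/2}` with the toric code braiding, the braided tensor
product algebra `A(H₃) ⊗ A(H₂)` is isomorphic as a (graded) algebra to the twisted group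
algebra `A(H₅, ψ)`.  Such a graded isomorphism is given by nonzero scalars `u g` with
`u 0 = 1` intertwining the structure constants: `u(g)u(h)ψ(g,h) = t(g,h)u(g+h)`. -/
theorem tensor_A3_A2_iso_A5_psi :
    ∃ u : ZMod 2 × ZMod 2 → ℂ, (∀ g, u g ≠ 0) ∧ u 0 = 1 ∧
      ∀ g h, u g * u h * kleinPsi g h = tensorConst32 g h * u (g + h) := by
  refine ⟨fun g => if g.1 = 1 ∧ g.2 = 1 then -1 else 1, ?_, ?_, ?_⟩
  · intro g; dsimp only; split <;> norm_num
  · norm_num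
  · rintro ⟨g1, g2⟩ ⟨h1, h2⟩
    fin_cases g1 <;> fin_cases g2 <;> fin_cases h1 <;> fin_cases h2 <;>
      simp +decide [kleinPsi, tensorConst32, toricBraiding]
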